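/- Let f_β : [0,1] → ℝ be defined by f_β(x) = x/β for 0 ≤ x < 1−β and f_β(x) = x/β + 1 − 1/β for 1−β ≤ x ≤ 1, and let μ be the Stieltjes measure on [0,1] induced by F_{β,p}. Then μ is f_β-invariant: μ(f_β^{−1}(A)) = μ(A) for every Borel set A ⊆ [0,1]. -/

import Mathlib

open MeasureTheory Set Filter

lemma aux_F0 (β p q : ℝ) (hβ0 : 0 < β) (hβ : β ≤ 1/2)
    (hp0 : 0 < p) (hp1 : p < 1) (hq : q = 1 - p)
    (F : ℝ → ℝ) (hmono : Monotone F)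
    (hbot : Filter.Tendsto F Filter.atBot (nhds 0))
    (hF : ∀ x : ℝ, F x = p * F (x / β) + q * F (x / β + 1 - 1 / β)) :
    ∀ x : ℝ, x ≤ 0 → F x = 0 := by
  subst hq
  have hq0 : 0 < 1 - p := by linarith
  have hβ2 : 2 ≤ 1/β := by rw [le_div_iff₀ hβ0]; linarith
  have hstep : ∀ y : ℝ, y < 0 → F y = F (2*y) := by
    intro y hy
    have h1 : y / β ≤ 2*y := by rw [div_le_iff₀ hβ0]; nlinarith
    have h2 : y / β + 1 - 1/β ≤ 2*y := by linarith
    have hle : F y ≤ F (2*y) := by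
      rw [hF y]
      have m1 := hmono h1; have m2 := hmono h2
      nlinarith [mul_le_mul_of_nonneg_left m1 hp0.le, mul_le_mul_of_nonneg_left m2 hq0.le]
    have hge : F (2*y) ≤ F y := hmono (by linarith)
    linarith
  have hneg : ∀ x : ℝ, x < 0 → F x = 0 := by
    intro x hx
    have hiter : ∀ n : ℕ, F x = F (2^n * x) := by
      intro n
      induction n with
      | zero => simp
      | succ n ih =>
        rw [ih, hstep (2^n * x) (mul_neg_of_pos_of_neg (by positivity) hx)]
        ring_nf
    have hT : Tendsto (fun n : ℕ => (2:ℝ)^n * x) atTop atBot :=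
      (tendsto_pow_atTop_atTop_of_one_lt (by norm_num : (1:ℝ) < 2)).atTop_mul_const_of_neg hx
    have hT2 : Tendsto (fun n : ℕ => F ((2:ℝ)^n * x)) atTop (nhds 0) := hbot.comp hT
    have hT3 : Tendsto (fun _ : ℕ => F x) atTop (nhds 0) := by
      convert hT2 using 2 with n
      exact hiter n
    exact tendsto_nhds_unique tendsto_const_nhds hT3
  intro x hx
  rcases eq_or_lt_of_le hx with rfl | hx
  · have h0 := hF 0
    rw [zero_div, hneg (0 + 1 - 1/β) (by linarith)] at h0
    nlinarith
  · exact hneg x hx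

lemma aux_F1 (β p q : ℝ) (hβ0 : 0 < β) (hβ : β ≤ 1/2)
    (hp0 : 0 < p) (hp1 : p < 1) (hq : q = 1 - p)
    (F : ℝ → ℝ) (hmono : Monotone F)
    (htop : Filter.Tendsto F Filter.atTop (nhds 1))
    (hF : ∀ x : ℝ, F x = p * F (x / β) + q * F (x / β + 1 - 1 / β)) :
    ∀ x : ℝ, 1 ≤ x → F x = 1 := by
  subst hq
  have hq0 : 0 < 1 - p := by linarith
  have hβ2 : 2 ≤ 1/β := by rw [le_div_iff₀ hβ0]; linarith
  have hstep : ∀ y : ℝ, 1 < y → F y = F (2*y - 1) := by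
    intro y hy
    have h1 : 2*y - 1 ≤ y / β := by rw [le_div_iff₀ hβ0]; nlinarith
    have h2 : 2*y - 1 ≤ y / β + 1 - 1/β := by
      have : 2*(y-1) ≤ (y-1)/β := by rw [le_div_iff₀ hβ0]; nlinarith
      have hyd : y/β = (y-1)/β + 1/β := by ring
      linarith
    have hge : F (2*y - 1) ≤ F y := by
      rw [hF y]
      have m1 := hmono h1; have m2 := hmono h2
      nlinarith [mul_le_mul_of_nonneg_left m1 hp0.le, mul_le_mul_of_nonneg_left m2 hq0.le]
    have hle : F y ≤ F (2*y - 1) := hmono (by linarith)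
    linarith
  have hgt : ∀ x : ℝ, 1 < x → F x = 1 := by
    intro x hx
    have hiter : ∀ n : ℕ, F x = F (2^n * (x - 1) + 1) := by
      intro n
      induction n with
      | zero => simp
      | succ n ih =>
        have hpt : (1:ℝ) < 2^n * (x-1) + 1 := by
          have : (0:ℝ) < 2^n * (x-1) := by
            have : (0:ℝ) < x - 1 := by linarith
            positivity
          linarith
        rw [ih, hstep _ hpt]; ring_nf
    have hT : Tendsto (fun n : ℕ => (2:ℝ)^n * (x-1) + 1) atTop atTop := by
      apply Filter.tendsto_atTop_add_const_right
      exact (tendsto_pow_atTop_atTop_of_one_lt (by norm_num : (1:ℝ) < 2)).atTop_mul_const (by linarith)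
    have hT2 : Tendsto (fun n : ℕ => F ((2:ℝ)^n * (x-1) + 1)) atTop (nhds 1) := htop.comp hT
    have hT3 : Tendsto (fun _ : ℕ => F x) atTop (nhds 1) := by
      convert hT2 using 2 with n
      exact hiter n
    exact tendsto_nhds_unique tendsto_const_nhds hT3
  intro x hx
  rcases eq_or_lt_of_le hx with rfl | hx
  · have h1 := hF 1
    rw [hgt (1/β) (by linarith)] at h1
    have he : (1:ℝ)/β + 1 - 1/β = 1 := by ring
    rw [he] at h1
    nlinarith
  · exact hgt x hx

lemma aux_atom (β p : ℝ) (hβ0 : 0 < β) (hβ : β ≤ 1/2)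
    (hp0 : 0 < p) (hp1 : p < 1)
    (F : ℝ → ℝ) (hmono : Monotone F)
    (hF : ∀ x : ℝ, F x = p * F (x / β) + (1-p) * F (x / β + 1 - 1 / β))
    (hF0 : ∀ x : ℝ, x ≤ 0 → F x = 0) (hF1 : ∀ x : ℝ, 1 ≤ x → F x = 1)
    (μ : Measure ℝ)
    (hμ : ∀ a b : ℝ, μ (Set.Ioc a b) = ENNReal.ofReal (F b - F a)) :
    μ {1 - β} = 0 := by
  have hβ2 : 2 ≤ 1/β := by rw [le_div_iff₀ hβ0]; linarith
  rcases lt_or_eq_of_le hβ with hlt | heq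
  · -- β < 1/2
    have hβ2' : 2 < 1/β := by rw [lt_div_iff₀ hβ0]; linarith
    have h1 : F (1-β) = p := by
      have h := hF (1-β)
      have e1 : (1-β)/β = 1/β - 1 := by field_simp
      have e2 : (1-β)/β + 1 - 1/β = 0 := by rw [e1]; ring
      rw [e2, hF0 0 le_rfl, e1, hF1 (1/β - 1) (by linarith)] at h
      linarith
    have h2 : F β = p := by
      have h := hF β
      have e1 : β/β = 1 := div_self (ne_of_gt hβ0)
      have e2 : β/β + 1 - 1/β = 2 - 1/β := by rw [e1]; ring
      rw [e2, hF0 (2 - 1/β) (by linarith), e1, hF1 1 le_rfl] at h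
      linarith
    have hsub : ({1-β} : Set ℝ) ⊆ Ioc β (1-β) :=
      singleton_subset_iff.mpr ⟨by linarith, le_rfl⟩
    refine le_antisymm ?_ zero_le
    calc μ {1-β} ≤ μ (Ioc β (1-β)) := measure_mono hsub
      _ = 0 := by rw [hμ, h1, h2]; simp
  · -- β = 1/2
    subst heq
    have hge : ∀ x : ℝ, 0 ≤ F x := by
      intro x
      rcases le_or_gt x 0 with h | h
      · exact (hF0 x h).ge
      · have h2 := hmono h.le
        rw [hF0 0 le_rfl] at h2
        exact h2
    have hF' : ∀ x : ℝ, F x = p * F (2*x) + (1-p) * F (2*x - 1) := by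
      intro x
      have h := hF x
      have e1 : x / ((1:ℝ)/2) = 2*x := by field_simp
      have e2 : x / ((1:ℝ)/2) + 1 - 1/((1:ℝ)/2) = 2*x - 1 := by rw [e1]; ring_nf
      rw [e2, e1] at h
      exact h
    have hbound : ∀ n : ℕ, 1 - F (1 - (1/2)^(n+1)) ≤ (1-p)^n := by
      intro n
      induction n with
      | zero =>
        have := hge (1 - ((1:ℝ)/2)^1)
        norm_num at this ⊢
        linarith
      | succ n ih =>
        have hδ0 : (0:ℝ) < (1/2)^(n+2) := by positivity
        have hδ2 : ((1:ℝ)/2)^(n+2) ≤ 1/2 := by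
          calc ((1:ℝ)/2)^(n+2) ≤ ((1:ℝ)/2)^1 :=
            pow_le_pow_of_le_one (by norm_num) (by norm_num) (by omega)
          _ = 1/2 := by norm_num
        have h := hF' (1 - (1/2)^(n+2))
        have e1 : 2 * (1 - ((1:ℝ)/2)^(n+2)) = 2 - (1/2)^(n+1) := by
          rw [pow_succ]; ring
        have e2 : 2 * (1 - ((1:ℝ)/2)^(n+2)) - 1 = 1 - (1/2)^(n+1) := by
          rw [pow_succ]; ring
        rw [e2, e1, hF1 (2 - (1/2)^(n+1)) (by nlinarith)] at h
        have hrec : 1 - F (1 - ((1:ℝ)/2)^(n+2)) = (1-p) * (1 - F (1 - (1/2)^(n+1))) := by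
          linarith
        have hp' : (0:ℝ) ≤ 1 - p := by linarith
        calc 1 - F (1 - ((1:ℝ)/2)^(n+1+1)) = (1-p) * (1 - F (1 - (1/2)^(n+1))) := hrec
          _ ≤ (1-p) * (1-p)^n := mul_le_mul_of_nonneg_left ih hp'
          _ = (1-p)^(n+1) := by rw [pow_succ]; ring
    have hjump : ∀ n : ℕ, μ {1 - (1/2:ℝ)} ≤ ENNReal.ofReal ((1-p)^n) := by
      intro n
      have hδ0 : (0:ℝ) < (1/2)^(n+2) := by positivity
      have hsub : ({1 - (1/2:ℝ)} : Set ℝ) ⊆ Ioc ((1:ℝ)/2 - (1/2)^(n+2)) (1/2) :=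
        singleton_subset_iff.mpr ⟨by norm_num, by norm_num⟩
      have hval : F ((1:ℝ)/2) - F ((1:ℝ)/2 - (1/2)^(n+2)) ≤ (1-p)^n := by
        have ha := hF' ((1:ℝ)/2)
        rw [show 2 * ((1:ℝ)/2) - 1 = 0 by norm_num, show 2 * ((1:ℝ)/2) = 1 by norm_num,
          hF1 1 le_rfl, hF0 0 le_rfl] at ha
        have hb := hF' ((1:ℝ)/2 - (1/2)^(n+2))
        have e1 : 2 * ((1:ℝ)/2 - (1/2)^(n+2)) = 1 - (1/2)^(n+1) := by rw [pow_succ]; ring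
        have e2 : 2 * ((1:ℝ)/2 - (1/2)^(n+2)) - 1 = -(1/2)^(n+1) := by rw [pow_succ]; ring
        have hp2 : (0:ℝ) < (1/2)^(n+1) := by positivity
        rw [e2, e1, hF0 (-(1/2)^(n+1)) (by linarith)] at hb
        have hbd := hbound n
        have h1 := hge (1 - ((1:ℝ)/2)^(n+1))
        have hFle : F (1 - ((1:ℝ)/2)^(n+1)) ≤ 1 := by
          have := hmono (show (1 : ℝ) - (1/2)^(n+1) ≤ 1 by linarith)
          rwa [hF1 1 le_rfl] at this
        nlinarith [pow_nonneg (show (0:ℝ) ≤ 1-p by linarith) n]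
      calc μ {1-(1/2:ℝ)} ≤ μ (Ioc ((1:ℝ)/2 - (1/2)^(n+2)) (1/2)) := measure_mono hsub
        _ = ENNReal.ofReal (F ((1:ℝ)/2) - F ((1:ℝ)/2 - (1/2)^(n+2))) := hμ _ _
        _ ≤ ENNReal.ofReal ((1-p)^n) := ENNReal.ofReal_le_ofReal hval
    refine le_antisymm ?_ zero_le
    have h1 : Tendsto (fun n : ℕ => (1-p)^n) atTop (nhds 0) :=
      tendsto_pow_atTop_nhds_zero_of_lt_one (by linarith) (by linarith)
    have hT : Tendsto (fun n : ℕ => ENNReal.ofReal ((1-p)^n)) atTop (nhds 0) := by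
      have := (ENNReal.continuous_ofReal.tendsto 0).comp h1
      simpa [Function.comp_def] using this
    exact ge_of_tendsto' hT hjump

lemma aux_key (β p : ℝ) (hβ0 : 0 < β) (hβ : β ≤ 1/2)
    (hp0 : 0 < p) (hp1 : p < 1)
    (F : ℝ → ℝ) (hmono : Monotone F)
    (hF : ∀ x : ℝ, F x = p * F (x / β) + (1-p) * F (x / β + 1 - 1 / β))
    (hF0 : ∀ x : ℝ, x ≤ 0 → F x = 0) (hF1 : ∀ x : ℝ, 1 ≤ x → F x = 1)
    (μ : Measure ℝ)
    (hμ : ∀ a b : ℝ, μ (Set.Ioc a b) = ENNReal.ofReal (F b - F a))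
    (hatom : μ {1 - β} = 0)
    (a b : ℝ) (ha : 0 ≤ a) (hab : a ≤ b) (hb : b ≤ 1) :
    μ ((fun x : ℝ => if x < 1 - β then x / β else x / β + 1 - 1 / β) ⁻¹' Set.Ioc a b ∩
        Set.Icc (0 : ℝ) 1) = μ (Set.Ioc a b) := by
  have hβ2 : 2 ≤ 1/β := by rw [le_div_iff₀ hβ0]; linarith
  have hβne : β ≠ 0 := ne_of_gt hβ0
  have hba0 : 0 ≤ β * a := mul_nonneg hβ0.le ha
  have hbb : β * b ≤ β := by nlinarith
  have hset : (fun x : ℝ => if x < 1 - β then x / β else x / β + 1 - 1 / β) ⁻¹' Set.Ioc a b ∩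
      Set.Icc (0 : ℝ) 1 =
      (Ioc (β*a) (β*b) ∩ Iio (1-β)) ∪ Ioc (β*a+(1-β)) (β*b+(1-β)) := by
    have key1 : ∀ x : ℝ, (a < x / β ∧ x / β ≤ b) ↔ (β*a < x ∧ x ≤ β*b) := by
      intro x
      rw [lt_div_iff₀ hβ0, div_le_iff₀ hβ0]
      constructor <;> rintro ⟨h1, h2⟩ <;> constructor <;> linarith
    have key2 : ∀ x : ℝ, (a < x / β + 1 - 1/β ∧ x / β + 1 - 1/β ≤ b) ↔
        (β*a+(1-β) < x ∧ x ≤ β*b+(1-β)) := by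
      intro x
      have e : x / β + 1 - 1/β = (x - (1 - β))/β := by field_simp; ring
      rw [e, lt_div_iff₀ hβ0, div_le_iff₀ hβ0]
      constructor <;> rintro ⟨h1, h2⟩ <;> constructor <;> linarith
    ext x
    simp only [mem_inter_iff, mem_preimage, mem_Ioc, mem_Icc, mem_union, mem_Iio]
    by_cases hlt : x < 1 - β
    · rw [if_pos hlt, key1 x]
      constructor
      · rintro ⟨h, -, -⟩; exact Or.inl ⟨h, hlt⟩
      · rintro (⟨h, -⟩ | ⟨h1, h2⟩)
        · exact ⟨h, by linarith [h.1], by linarith [h.2]⟩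
        · exact absurd hlt (by linarith)
    · rw [if_neg hlt, key2 x]
      constructor
      · rintro ⟨h, -, -⟩; exact Or.inr h
      · rintro (⟨⟨h1, h2⟩, h3⟩ | h)
        · exact absurd h3 hlt
        · exact ⟨h, by linarith [h.1], by linarith [h.2]⟩
  rw [hset]
  have hd : Disjoint (Ioc (β*a) (β*b) ∩ Iio (1-β)) (Ioc (β*a+(1-β)) (β*b+(1-β))) := by
    rw [Set.disjoint_left]
    rintro x ⟨-, hx⟩ ⟨hx1, -⟩
    rw [mem_Iio] at hx
    linarith
  rw [measure_union hd measurableSet_Ioc]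
  have h1 : μ (Ioc (β*a) (β*b) ∩ Iio (1-β)) = μ (Ioc (β*a) (β*b)) := by
    apply le_antisymm (measure_mono inter_subset_left)
    have hsub : Ioc (β*a) (β*b) ⊆ (Ioc (β*a) (β*b) ∩ Iio (1-β)) ∪ {1-β} := by
      intro x hx
      rcases lt_or_ge x (1-β) with h | h
      · exact Or.inl ⟨hx, h⟩
      · right
        have hx2 := hx.2
        have : x = 1 - β := le_antisymm (by linarith) h
        simp [this]
    calc μ (Ioc (β*a) (β*b)) ≤ μ ((Ioc (β*a) (β*b) ∩ Iio (1-β)) ∪ {1-β}) := measure_mono hsub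
      _ ≤ μ (Ioc (β*a) (β*b) ∩ Iio (1-β)) + μ {1-β} := measure_union_le _ _
      _ = μ (Ioc (β*a) (β*b) ∩ Iio (1-β)) := by rw [hatom, add_zero]
  rw [h1, hμ, hμ, hμ]
  have e1 : F (β*a) = p * F a := by
    have h := hF (β*a)
    have d1 : β*a/β = a := by field_simp
    have d2 : β*a/β + 1 - 1/β = a + 1 - 1/β := by rw [d1]
    rw [d2, hF0 (a + 1 - 1/β) (by linarith), d1] at h
    linarith
  have e2 : F (β*b) = p * F b := by
    have h := hF (β*b)
    have d1 : β*b/β = b := by field_simp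
    have d2 : β*b/β + 1 - 1/β = b + 1 - 1/β := by rw [d1]
    rw [d2, hF0 (b + 1 - 1/β) (by linarith), d1] at h
    linarith
  have e3 : F (β*a+(1-β)) = p + (1-p) * F a := by
    have h := hF (β*a+(1-β))
    have d1 : (β*a+(1-β))/β = a + 1/β - 1 := by field_simp; ring
    have d2 : (β*a+(1-β))/β + 1 - 1/β = a := by rw [d1]; ring
    rw [d2, d1, hF1 (a + 1/β - 1) (by linarith)] at h
    linarith
  have e4 : F (β*b+(1-β)) = p + (1-p) * F b := by
    have h := hF (β*b+(1-β))
    have d1 : (β*b+(1-β))/β = b + 1/β - 1 := by field_simp; ring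
    have d2 : (β*b+(1-β))/β + 1 - 1/β = b := by rw [d1]; ring
    rw [d2, d1, hF1 (b + 1/β - 1) (by linarith)] at h
    linarith
  have hm1 : F (β*a) ≤ F (β*b) := hmono (by nlinarith)
  have hm2 : F (β*a+(1-β)) ≤ F (β*b+(1-β)) := hmono (by nlinarith)
  rw [← ENNReal.ofReal_add (by linarith) (by linarith)]
  congr 1
  rw [e1, e2, e3, e4]
  ring

theorem stmt18 (β p q : ℝ) (hβ0 : 0 < β) (hβ : β ≤ 1/2)
    (hp0 : 0 < p) (hp1 : p < 1) (hq : q = 1 - p)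
    (hne : ¬(β = 1/2 ∧ p = 1/2))
    (F : ℝ → ℝ) (hmono : Monotone F)
    (hrc : ∀ x : ℝ, ContinuousWithinAt F (Set.Ici x) x)
    (hbot : Filter.Tendsto F Filter.atBot (nhds 0))
    (htop : Filter.Tendsto F Filter.atTop (nhds 1))
    (hF : ∀ x : ℝ, F x = p * F (x / β) + q * F (x / β + 1 - 1 / β))
    (μ : Measure ℝ)
    (hμ : ∀ a b : ℝ, μ (Set.Ioc a b) = ENNReal.ofReal (F b - F a)) :
    ∀ A : Set ℝ, MeasurableSet A → A ⊆ Set.Icc (0 : ℝ) 1 →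
      μ ((fun x : ℝ => if x < 1 - β then x / β else x / β + 1 - 1 / β) ⁻¹' A ∩
          Set.Icc (0 : ℝ) 1) = μ A := by
  have hF0 := aux_F0 β p q hβ0 hβ hp0 hp1 hq F hmono hbot hF
  have hF1 := aux_F1 β p q hβ0 hβ hp0 hp1 hq F hmono htop hF
  subst hq
  have hatom := aux_atom β p hβ0 hβ hp0 hp1 F hmono hF hF0 hF1 μ hμ
  have hkey := aux_key β p hβ0 hβ hp0 hp1 F hmono hF hF0 hF1 μ hμ hatom
  set f : ℝ → ℝ := fun x => if x < 1 - β then x / β else x / β + 1 - 1 / β with hfdef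
  have hf : Measurable f := by
    apply Measurable.ite (measurableSet_lt measurable_id measurable_const)
    · exact measurable_id.div_const β
    · exact ((measurable_id.div_const β).add_const 1).sub_const (1/β)
  have hμ0 : μ {(0:ℝ)} = 0 := by
    refine le_antisymm ?_ zero_le
    calc μ {(0:ℝ)} ≤ μ (Ioc (-1) 0) :=
        measure_mono (singleton_subset_iff.mpr ⟨by norm_num, le_rfl⟩)
      _ = 0 := by
        rw [hμ, hF0 0 le_rfl, hF0 (-1) (by norm_num)]
        simp
  have hfin : μ (Icc (0:ℝ) 1) ≠ ⊤ := by
    have hle : μ (Icc (0:ℝ) 1) ≤ μ (Ioc (-1 : ℝ) 1) :=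
      measure_mono (fun x hx => ⟨by linarith [hx.1], hx.2⟩)
    rw [hμ] at hle
    exact (hle.trans_lt ENNReal.ofReal_lt_top).ne
  intro A hA hA01
  set ν : Measure ℝ := (μ.restrict (Icc 0 1)).map f with hνdef
  have hν : ∀ B : Set ℝ, MeasurableSet B → ν B = μ (f ⁻¹' B ∩ Icc 0 1) := by
    intro B hB
    rw [hνdef, Measure.map_apply hf hB, Measure.restrict_apply (hf hB)]
  have hν0 : ν {(0:ℝ)} = 0 := by
    rw [hν _ (measurableSet_singleton 0)]
    refine le_antisymm ?_ zero_le
    have hsub : f ⁻¹' {(0:ℝ)} ∩ Icc 0 1 ⊆ {0, 1 - β} := by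
      rintro x ⟨hx, -, -⟩
      simp only [mem_preimage, mem_singleton_iff] at hx
      simp only [mem_insert_iff, mem_singleton_iff]
      by_cases hlt : x < 1 - β
      · rw [hfdef] at hx
        simp only [if_pos hlt] at hx
        left
        field_simp at hx
        simpa using hx
      · rw [hfdef] at hx
        simp only [if_neg hlt] at hx
        right
        have hβne : β ≠ 0 := ne_of_gt hβ0
        field_simp at hx
        linarith
    calc μ (f ⁻¹' {(0:ℝ)} ∩ Icc 0 1) ≤ μ ({0, 1 - β} : Set ℝ) := measure_mono hsub
      _ ≤ μ {(0:ℝ)} + μ {1 - β} := by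
          rw [show ({0, 1 - β} : Set ℝ) = {0} ∪ {1-β} by rfl]
          exact measure_union_le _ _
      _ = 0 := by rw [hμ0, hatom, add_zero]
  have hνfin : ν Set.univ ≠ ⊤ := by
    rw [hν _ MeasurableSet.univ]
    rw [preimage_univ, univ_inter]
    exact hfin
  have hext : ν.restrict (Icc 0 1) = μ.restrict (Icc 0 1) := by
    refine Measure.ext_of_Ioc' _ _ (fun c d _ => ?_) (fun c d hcd => ?_)
    · refine ne_top_of_le_ne_top hνfin ?_
      exact le_trans (Measure.restrict_apply_le _ _) (measure_mono (subset_univ _))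
    · rw [Measure.restrict_apply measurableSet_Ioc, Measure.restrict_apply measurableSet_Ioc]
      set c' := max c 0 with hc'
      set d' := min d 1 with hd'
      have hsub1 : Ioc c d ∩ Icc 0 1 ⊆ Ioc c' d' ∪ {0} := by
        rintro x ⟨⟨hx1, hx2⟩, hx3, hx4⟩
        rcases eq_or_lt_of_le hx3 with rfl | hx3'
        · exact Or.inr rfl
        · exact Or.inl ⟨max_lt_iff.mpr ⟨hx1, hx3'⟩, le_min hx2 hx4⟩
      have hsub2 : Ioc c' d' ⊆ Ioc c d ∩ Icc 0 1 := by
        rintro x ⟨hx1, hx2⟩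
        have h1 := lt_of_le_of_lt (le_max_left c 0) hx1
        have h2 := lt_of_le_of_lt (le_max_right c 0) hx1
        exact ⟨⟨h1, hx2.trans (min_le_left d 1)⟩, h2.le, hx2.trans (min_le_right d 1)⟩
      have hmeq : ∀ m : Measure ℝ, m {(0:ℝ)} = 0 → m (Ioc c d ∩ Icc 0 1) = m (Ioc c' d') := by
        intro m hm0
        apply le_antisymm
        · calc m (Ioc c d ∩ Icc 0 1) ≤ m (Ioc c' d' ∪ {0}) := measure_mono hsub1
            _ ≤ m (Ioc c' d') + m {0} := measure_union_le _ _
            _ = m (Ioc c' d') := by rw [hm0, add_zero]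
        · exact measure_mono hsub2
      rw [hmeq ν hν0, hmeq μ hμ0]
      rcases le_or_gt c' d' with h | h
      · rw [hν _ measurableSet_Ioc]
        exact hkey c' d' (le_max_right c 0) h (min_le_right d 1)
      · rw [Set.Ioc_eq_empty h.not_gt]
        simp
  calc μ (f ⁻¹' A ∩ Icc 0 1) = ν A := (hν A hA).symm
    _ = ν (A ∩ Icc 0 1) := by rw [inter_eq_self_of_subset_left hA01]
    _ = ν.restrict (Icc 0 1) A := (Measure.restrict_apply hA).symm
    _ = μ.restrict (Icc 0 1) A := by rw [hext]
    _ = μ (A ∩ Icc 0 1) := Measure.restrict_apply hA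
    _ = μ A := by rw [inter_eq_self_of_subset_left hA01]
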